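/- (One-dimensional OLCT sampling theorem in the transform domain) Let A = (a,b,c,d,τ,η) with ad − bc = 1, b > 0. Suppose f ∈ L²(ℝ) is supported in [−B/2, B/2] and let F^A(u) = ∫ f(t) h_A(t,u) dt be its OLCT. Then for any sampling interval Δ ≤ 2πb/B, F^A is determined by its samples F^A(nΔ), n ∈ ℤ, via F^A(u) = e^{(i/(2b))(d u² − 2u(dτ − bη))} ∑_{n∈ℤ} F^A(nΔ) · sinc(u/Δ − n) · e^{−(i/(2b))(d(nΔ)² − 2nΔ(dτ − bη))}, where sinc(x) = sin(πx)/(πx) (with sinc(0)=1), and the series converges in L² on compact sets. -/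

import Mathlib

open Complex Real MeasureTheory
open scoped ENNReal NNReal

/-- One-dimensional OLCT kernel with `b > 0`. -/
noncomputable def olctKernel1D (a b d τ η : ℝ) (t u : ℝ) : ℂ :=
  ((2 * (Real.pi : ℂ) * Complex.I * (b : ℂ)) ^ ((2 : ℂ)⁻¹))⁻¹ *
    Complex.exp (Complex.I * ((d * τ ^ 2 / (2 * b) : ℝ) : ℂ)) *
    Complex.exp (Complex.I *
      (((a / (2 * b)) * t ^ 2 + (1 / b) * t * (τ - u) - (1 / b) * u * (d * τ - b * η)
        + (d / (2 * b)) * u ^ 2 : ℝ) : ℂ))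

/-- Normalized sinc, `sinc x = sin(πx)/(πx)` with `sinc 0 = 1`. -/
noncomputable def sinc (x : ℝ) : ℝ :=
  if x = 0 then 1 else Real.sin (Real.pi * x) / (Real.pi * x)

namespace SternAux

lemma measurable_liftIoc {T : ℝ} [hT : Fact (0 < T)] (a : ℝ) {φ : ℝ → ℂ} (hφ : Measurable φ) :
    Measurable (AddCircle.liftIoc T a φ) := by
  have : AddCircle.liftIoc T a φ = (φ ∘ (Subtype.val)) ∘ (AddCircle.measurableEquivIoc T a) := rfl
  rw [this]
  exact ((hφ.comp measurable_subtype_coe).comp (AddCircle.measurableEquivIoc T a).measurable)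

lemma memLp_liftIoc {T : ℝ} [hT : Fact (0 < T)] (a : ℝ) {φ : ℝ → ℂ} (hφ : Measurable φ)
    (h2 : ∫⁻ x in Set.Ioc a (a + T), (‖φ x‖₊ : ℝ≥0∞) ^ (2 : ℝ) < ⊤) :
    MemLp (AddCircle.liftIoc T a φ) 2 AddCircle.haarAddCircle := by
  refine ⟨(measurable_liftIoc a hφ).aestronglyMeasurable, ?_⟩
  rw [eLpNorm_lt_top_iff_lintegral_rpow_enorm_lt_top (by norm_num) (by norm_num)]
  have key : ∫⁻ z, (‖AddCircle.liftIoc T a φ z‖₊ : ℝ≥0∞) ^ (2:ℝ) ∂(volume)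
      = ∫⁻ x in Set.Ioc a (a+T), (‖φ x‖₊:ℝ≥0∞)^(2:ℝ) := by
    rw [← AddCircle.lintegral_preimage T a (fun z => (‖AddCircle.liftIoc T a φ z‖₊:ℝ≥0∞)^(2:ℝ))]
    refine setLIntegral_congr_fun measurableSet_Ioc (fun x hx => ?_)
    rw [AddCircle.liftIoc_coe_apply hx]
  have hvol : (volume : Measure (AddCircle T)) = ENNReal.ofReal T • AddCircle.haarAddCircle :=
    AddCircle.volume_eq_smul_haarAddCircle
  have h3 : ∫⁻ z, (‖AddCircle.liftIoc T a φ z‖₊ : ℝ≥0∞) ^ (2:ℝ) ∂(volume) < ⊤ := key ▸ h2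
  rw [hvol, lintegral_smul_measure] at h3
  have hT0 : ENNReal.ofReal T ≠ 0 := by
    simp [ENNReal.ofReal_eq_zero, not_le, hT.out]
  have h4 : (2 : ℝ≥0∞).toReal = (2:ℝ) := by norm_num
  rw [h4]
  by_contra hcon
  push_neg at hcon
  have h5 : ∫⁻ z, (‖AddCircle.liftIoc T a φ z‖₊ : ℝ≥0∞) ^ (2:ℝ) ∂AddCircle.haarAddCircle = ⊤ :=
    top_le_iff.mp hcon
  rw [h5, smul_eq_mul, ENNReal.mul_top hT0] at h3
  exact (lt_irrefl _ h3).elim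

lemma key_integral {L : ℝ} (hL : 0 < L) (s : ℝ) :
    ∫ x in (-(L/2))..(L/2), Complex.exp (Complex.I * s * x) =
      (L : ℂ) * ((_root_.sinc (s * L / (2 * Real.pi)) : ℝ) : ℂ) := by
  rcases eq_or_ne s 0 with hs | hs
  · simp [hs, _root_.sinc]
  · have hx0 : s * L / (2 * Real.pi) ≠ 0 := by
      apply div_ne_zero (mul_ne_zero hs hL.ne') (by positivity)
    have hc : (Complex.I * (s:ℂ)) ≠ 0 := by
      simp [Complex.I_ne_zero, Complex.ofReal_eq_zero, hs]
    have hint : ∫ x in (-(L/2))..(L/2), Complex.exp (Complex.I * s * x) =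
        (Complex.exp (Complex.I * s * (L/2)) - Complex.exp (Complex.I * s * (-(L/2)))) /
          (Complex.I * s) := by
      have := integral_exp_mul_complex (a := -(L/2)) (b := (L/2)) hc
      simpa [mul_assoc] using this
    have hθ : Real.pi * (s * L / (2 * Real.pi)) = s * L / 2 := by
      field_simp
    rw [hint]
    push_cast [_root_.sinc, if_neg hx0, hθ]
    rw [show Complex.I * (s:ℂ) * ((L:ℂ)/2) = ((s:ℂ)*(L:ℂ)/2) * Complex.I from by ring,
        show Complex.I * (s:ℂ) * -((L:ℂ)/2) = (-((s:ℂ)*(L:ℂ)/2)) * Complex.I from by ring,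
        Complex.exp_mul_I, Complex.exp_mul_I, Complex.cos_neg, Complex.sin_neg]
    have hsc : (s:ℂ) ≠ 0 := by simpa using hs
    have hLc : (L:ℂ) ≠ 0 := by simpa using hL.ne'
    field_simp
    ring

lemma kernel_factor (a b d τ η : ℝ) (hb : b ≠ 0) (t v : ℝ) :
    olctKernel1D a b d τ η t v =
      Complex.exp ((Complex.I / (2*b)) * ((d * v^2 - 2*v*(d*τ - b*η) : ℝ):ℂ)) *
      (((2 * (Real.pi : ℂ) * Complex.I * (b : ℂ)) ^ ((2 : ℂ)⁻¹))⁻¹ *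
       Complex.exp (Complex.I * ((d * τ ^ 2 / (2 * b) : ℝ) : ℂ)) *
       Complex.exp (Complex.I * ((a/(2*b) * t^2 + t * τ / b : ℝ) : ℂ)) *
       Complex.exp (-(Complex.I * ((t * v / b : ℝ):ℂ)))) := by
  have hbc : (b:ℂ) ≠ 0 := by simpa using hb
  rw [olctKernel1D]
  rw [mul_assoc, ← Complex.exp_add]
  rw [show Complex.exp ((Complex.I / (2*b)) * ((d * v^2 - 2*v*(d*τ - b*η) : ℝ):ℂ)) *
      (((2 * (Real.pi : ℂ) * Complex.I * (b : ℂ)) ^ ((2 : ℂ)⁻¹))⁻¹ *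
       Complex.exp (Complex.I * ((d * τ ^ 2 / (2 * b) : ℝ) : ℂ)) *
       Complex.exp (Complex.I * ((a/(2*b) * t^2 + t * τ / b : ℝ) : ℂ)) *
       Complex.exp (-(Complex.I * ((t * v / b : ℝ):ℂ)))) =
      ((2 * (Real.pi : ℂ) * Complex.I * (b : ℂ)) ^ ((2 : ℂ)⁻¹))⁻¹ *
       (Complex.exp (Complex.I * ((d * τ ^ 2 / (2 * b) : ℝ) : ℂ)) *
        (Complex.exp ((Complex.I / (2*b)) * ((d * v^2 - 2*v*(d*τ - b*η) : ℝ):ℂ)) *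
         (Complex.exp (Complex.I * ((a/(2*b) * t^2 + t * τ / b : ℝ) : ℂ)) *
          Complex.exp (-(Complex.I * ((t * v / b : ℝ):ℂ)))))) from by ring]
  rw [← Complex.exp_add, ← Complex.exp_add, ← Complex.exp_add]
  congr 2
  push_cast
  field_simp
  ring

lemma integral_haar_liftIoc {L : ℝ} [hL : Fact (0 < L)] (a : ℝ) (Φ : AddCircle L → ℂ)
    (ψ : ℝ → ℂ) (h : ∀ x ∈ Set.Ioc a (a+L), Φ x = ψ x) :
    ∫ z, Φ z ∂AddCircle.haarAddCircle = (1/L : ℂ) * ∫ x in Set.Ioc a (a+L), ψ x := by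
  have hvol : (volume : Measure (AddCircle L)) = ENNReal.ofReal L • AddCircle.haarAddCircle :=
    AddCircle.volume_eq_smul_haarAddCircle
  have h1 : ∫ z, Φ z ∂(volume : Measure (AddCircle L)) =
      (L:ℂ) * ∫ z, Φ z ∂AddCircle.haarAddCircle := by
    rw [hvol, integral_smul_measure, ENNReal.toReal_ofReal hL.out.le]
    simp [Complex.real_smul]
  have h2 : ∫ z, Φ z ∂(volume : Measure (AddCircle L)) = ∫ x in Set.Ioc a (a+L), ψ x := by
    rw [← AddCircle.integral_preimage L a Φ]
    exact setIntegral_congr_fun measurableSet_Ioc fun x hx => h x hx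
  have hLc : (L:ℂ) ≠ 0 := by simpa using hL.out.ne'
  field_simp
  rw [← h2, h1]
  ring

lemma conj_exp_I_mul (r : ℝ) :
    (starRingEnd ℂ) (Complex.exp (Complex.I * (r:ℂ))) = Complex.exp (-(Complex.I * r)) := by
  rw [← Complex.exp_conj]
  congr 1
  simp [Complex.conj_I]

lemma norm_exp_I_mul_real (r : ℝ) : ‖Complex.exp (Complex.I * (r:ℂ))‖ = 1 := by
  rw [Complex.norm_exp]
  simp

end SternAux

/-- Stern's sampling theorem for the OLCT of a time-limited signal:
if `f ∈ L²` is supported in `[-B/2, B/2]` and `Δ ≤ 2πb/B`, then the OLCT `F^A` is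
reconstructed from its samples `F^A(nΔ)` by a chirp-modulated Shannon series. -/
theorem stmt10 (a b c d τ η B Δ : ℝ) (hdet : a * d - b * c = 1) (hb : 0 < b)
    (hB : 0 < B) (hΔ : 0 < Δ) (hΔ2 : Δ ≤ 2 * Real.pi * b / B)
    (f : ℝ → ℂ) (hfL2 : MemLp f 2 (volume : Measure ℝ))
    (hsupp : ∀ t : ℝ, t ∉ Set.Icc (-B / 2) (B / 2) → f t = 0)
    (F : ℝ → ℂ) (hF : ∀ u : ℝ, F u = ∫ t : ℝ, f t * olctKernel1D a b d τ η t u) :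
    ∀ u : ℝ,
      F u = Complex.exp ((Complex.I / (2 * b)) *
              ((d * u ^ 2 - 2 * u * (d * τ - b * η) : ℝ) : ℂ)) *
        ∑' n : ℤ, F (n * Δ) * (_root_.sinc (u / Δ - n) : ℂ) *
          Complex.exp (-((Complex.I / (2 * b)) *
            ((d * (n * Δ) ^ 2 - 2 * (n * Δ) * (d * τ - b * η) : ℝ) : ℂ))) := by
  intro u
  have hb' : b ≠ 0 := hb.ne'
  have hπ : (0:ℝ) < Real.pi := Real.pi_pos
  set L : ℝ := 2 * Real.pi * b / Δ with hLdef
  have hL : 0 < L := by positivity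
  have hBL : B ≤ L := by
    rw [hLdef, le_div_iff₀ hΔ]
    have h1 : Δ * B ≤ 2 * Real.pi * b := by
      have h2 := mul_le_mul_of_nonneg_right hΔ2 hB.le
      rwa [div_mul_cancel₀ _ hB.ne'] at h2
    nlinarith
  haveI : Fact (0 < L) := ⟨hL⟩
  set a₀ : ℝ := -(L/2) with ha₀
  have ha₀L : a₀ + L = L/2 := by rw [ha₀]; ring
  -- the chirps
  set χ : ℝ → ℂ := fun v =>
    Complex.exp ((Complex.I / (2*b)) * ((d * v^2 - 2*v*(d*τ - b*η) : ℝ):ℂ)) with hχ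
  set c₁ : ℝ → ℂ := fun t =>
    ((2 * (Real.pi : ℂ) * Complex.I * (b : ℂ)) ^ ((2 : ℂ)⁻¹))⁻¹ *
    Complex.exp (Complex.I * ((d * τ ^ 2 / (2 * b) : ℝ) : ℂ)) *
    Complex.exp (Complex.I * ((a/(2*b) * t^2 + t * τ / b : ℝ) : ℂ)) with hc₁
  -- measurable version of f, cut to the open-closed interval
  set f' : ℝ → ℂ := hfL2.1.mk f with hf'
  have hf'm : StronglyMeasurable f' := hfL2.1.stronglyMeasurable_mk
  have hf'ae : f =ᵐ[volume] f' := hfL2.1.ae_eq_mk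
  set g : ℝ → ℂ := (Set.Ioc (-(B/2)) (B/2)).indicator (fun t => f' t * c₁ t) with hg
  have hc₁m : Measurable c₁ := by
    apply Measurable.mul
    · exact measurable_const
    · exact (Complex.measurable_exp.comp (by fun_prop))
  have hgm : Measurable g :=
    (hf'm.measurable.mul hc₁m).indicator measurableSet_Ioc
  have hgae : g =ᵐ[volume] fun t => f t * c₁ t := by
    have hsing : ∀ᵐ t : ℝ, t ≠ -(B/2) := by
      have : (volume : Measure ℝ) {-(B/2)} = 0 := Real.volume_singleton
      exact ae_iff.mpr (by simpa using this)
    filter_upwards [hf'ae, hsing] with t ht hts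
    rw [hg]
    by_cases hmem : t ∈ Set.Ioc (-(B/2)) (B/2)
    · rw [Set.indicator_of_mem hmem, ht]
    · rw [Set.indicator_of_notMem hmem]
      have : f t = 0 := by
        apply hsupp
        intro hIcc
        apply hmem
        rcases hIcc with ⟨h1, h2⟩
        refine ⟨lt_of_le_of_ne ?_ (Ne.symm hts), h2⟩
        linarith [h1]
      rw [this, zero_mul]
  -- norm of c₁ is constant
  have hc₁norm : ∀ t, ‖c₁ t‖ = ‖(((2 * (Real.pi : ℂ) * Complex.I * (b : ℂ)) ^ ((2 : ℂ)⁻¹))⁻¹ :ℂ)‖ := by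
    intro t
    rw [hc₁]
    rw [norm_mul, norm_mul, SternAux.norm_exp_I_mul_real, SternAux.norm_exp_I_mul_real,
      mul_one, mul_one]
  -- g ∈ L²(ℝ)
  have hgL2 : MemLp g 2 (volume : Measure ℝ) := by
    set K : ℝ := ‖(((2 * (Real.pi : ℂ) * Complex.I * (b : ℂ)) ^ ((2 : ℂ)⁻¹))⁻¹ :ℂ)‖ with hK
    have hbound : MemLp (fun t => (K:ℂ) * f t) 2 (volume : Measure ℝ) := hfL2.const_mul _
    refine MemLp.of_le hbound hgm.aestronglyMeasurable ?_
    filter_upwards [hf'ae] with t ht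
    rw [hg]
    by_cases hmem : t ∈ Set.Ioc (-(B/2)) (B/2)
    · rw [Set.indicator_of_mem hmem, norm_mul, hc₁norm t, norm_mul, Complex.norm_real,
        Real.norm_eq_abs, ← ht]
      have hK0 : (0:ℝ) ≤ K := hK ▸ norm_nonneg _
      rw [_root_.abs_of_nonneg hK0]
      exact le_of_eq (mul_comm _ _)
    · rw [Set.indicator_of_notMem hmem, norm_zero]
      positivity
  -- g vanishes outside the big interval
  have hgzero : ∀ x : ℝ, x ∉ Set.Ioc a₀ (a₀ + L) → g x = 0 := by
    intro x hx
    rw [hg]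
    apply Set.indicator_of_notMem
    intro hmem
    apply hx
    constructor
    · rw [ha₀]; linarith [hmem.1]
    · rw [ha₀L]; linarith [hmem.2]
  set Eu : ℝ → ℝ → ℂ := fun v t => Complex.exp (Complex.I * ((t * v / b : ℝ):ℂ)) with hEu
  set G' : ℝ → ℂ :=
    fun v => ∫ t : ℝ, g t * Complex.exp (-(Complex.I * ((t * v / b : ℝ):ℂ))) with hG'
  have hext : ∀ v : ℝ,
      ∫ x in Set.Ioc a₀ (a₀+L), g x * Complex.exp (-(Complex.I * ((x * v / b : ℝ):ℂ))) = G' v := by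
    intro v
    simp only [hG']
    exact setIntegral_eq_integral_of_forall_compl_eq_zero fun x hx => by
      rw [hgzero x hx, zero_mul]
  -- F in terms of the chirp and the de-chirped transform G'
  have hFχ : ∀ v : ℝ, F v = χ v * G' v := by
    intro v
    rw [hF v]
    simp only [hG']
    rw [← integral_const_mul]
    apply integral_congr_ae
    filter_upwards [hgae] with t ht
    rw [SternAux.kernel_factor a b d τ η hb' t v, ht]
    simp only [hχ, hc₁]
    ring
  -- membership in L² of the circle for the lifts
  have hEm : ∀ v : ℝ, Measurable (Eu v) := by
    intro v
    simp only [hEu]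
    exact Complex.measurable_exp.comp (by fun_prop)
  have hgsq : ∫⁻ x in Set.Ioc a₀ (a₀ + L), (‖g x‖₊ : ℝ≥0∞) ^ (2:ℝ) < ⊤ := by
    calc ∫⁻ x in Set.Ioc a₀ (a₀ + L), (‖g x‖₊ : ℝ≥0∞) ^ (2:ℝ)
        ≤ ∫⁻ x, (‖g x‖₊ : ℝ≥0∞) ^ (2:ℝ) := setLIntegral_le_lintegral _ _
      _ < ⊤ := by
          have h2 := lintegral_rpow_enorm_lt_top_of_eLpNorm_lt_top
            (f := g) (p := 2) (by norm_num) (by norm_num) hgL2.2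
          simpa [enorm_eq_nnnorm] using h2
  have hgC : MemLp (AddCircle.liftIoc L a₀ g) 2 AddCircle.haarAddCircle :=
    SternAux.memLp_liftIoc a₀ hgm hgsq
  have hEsq : ∀ v : ℝ, ∫⁻ x in Set.Ioc a₀ (a₀ + L), (‖Eu v x‖₊ : ℝ≥0∞) ^ (2:ℝ) < ⊤ := by
    intro v
    have hnorm : ∀ x : ℝ, (‖Eu v x‖₊ : ℝ≥0∞) ^ (2:ℝ) = 1 := by
      intro x
      have h1 : ‖Eu v x‖₊ = 1 := by
        apply NNReal.coe_injective
        rw [coe_nnnorm]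
        simp only [hEu]
        rw [SternAux.norm_exp_I_mul_real]
        simp
      rw [h1]
      simp
    simp only [hnorm]
    rw [setLIntegral_one, Real.volume_Ioc]
    exact ENNReal.ofReal_lt_top
  have hEC : ∀ v : ℝ, MemLp (AddCircle.liftIoc L a₀ (Eu v)) 2 AddCircle.haarAddCircle :=
    fun v => SternAux.memLp_liftIoc a₀ (hEm v) (hEsq v)
  set Glp : Lp ℂ 2 (AddCircle.haarAddCircle (T := L)) := hgC.toLp _ with hGlp
  set Elp : Lp ℂ 2 (AddCircle.haarAddCircle (T := L)) := (hEC u).toLp _ with hElp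
  have hbc : (b:ℂ) ≠ 0 := by simpa using hb'
  have hΔc : (Δ:ℂ) ≠ 0 := by simpa using hΔ.ne'
  have hπc : ((Real.pi:ℝ):ℂ) ≠ 0 := by simpa using hπ.ne'
  have hLc : (L:ℂ) ≠ 0 := by simpa using hL.ne'
  -- Fourier coefficients of the lift of g
  have hcoeff_g : ∀ n : ℤ, fourierCoeff (AddCircle.liftIoc L a₀ g) n
      = (1/L : ℂ) * G' ((n:ℝ) * Δ) := by
    intro n
    rw [fourierCoeff, SternAux.integral_haar_liftIoc a₀ _
      (fun x => g x * Complex.exp (-(Complex.I * ((x * ((n:ℝ) * Δ) / b : ℝ):ℂ)))) ?_,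
      hext ((n:ℝ) * Δ)]
    intro x hx
    rw [AddCircle.liftIoc_coe_apply hx, smul_eq_mul, fourier_coe_apply, mul_comm]
    congr 1
    congr 1
    simp only [hLdef]
    push_cast
    field_simp [hbc, hΔc, hπc]
  -- Fourier coefficients of the lift of the pure frequency Eu u
  have hcoeff_E : ∀ n : ℤ, fourierCoeff (AddCircle.liftIoc L a₀ (Eu u)) n
      = ((_root_.sinc (u/Δ - n) : ℝ) : ℂ) := by
    intro n
    rw [fourierCoeff, SternAux.integral_haar_liftIoc a₀ _
      (fun x => Complex.exp (Complex.I * (((u - (n:ℝ)*Δ)/b : ℝ):ℂ) * (x:ℂ))) ?_]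
    · rw [← intervalIntegral.integral_of_le (by linarith : a₀ ≤ a₀ + L), ha₀L, ha₀,
        SternAux.key_integral hL ((u - (n:ℝ)*Δ)/b)]
      have harg : (u - (n:ℝ)*Δ)/b * L / (2*Real.pi) = u/Δ - n := by
        simp only [hLdef]
        field_simp [Real.pi_ne_zero, hb', hΔ.ne']
      rw [harg]
      field_simp
    · intro x hx
      rw [AddCircle.liftIoc_coe_apply hx, smul_eq_mul, fourier_coe_apply]
      simp only [hEu]
      rw [← Complex.exp_add]
      congr 1
      simp only [hLdef]
      push_cast
      field_simp [hbc, hΔc, hπc]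
      ring
  -- the inner product of Elp with Glp is (1/L) G' u
  have hinner : (inner ℂ Elp Glp : ℂ) = (1/L : ℂ) * G' u := by
    rw [MeasureTheory.L2.inner_def]
    have hae : ∀ᵐ z ∂(AddCircle.haarAddCircle (T:=L)), (inner ℂ (Elp z) (Glp z) : ℂ) =
        (starRingEnd ℂ) (AddCircle.liftIoc L a₀ (Eu u) z) * (AddCircle.liftIoc L a₀ g z) := by
      filter_upwards [(hEC u).coeFn_toLp, hgC.coeFn_toLp] with z h1 h2
      rw [RCLike.inner_apply]
      simp only [hElp, hGlp]
      rw [h1, h2, mul_comm]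
    rw [integral_congr_ae hae, SternAux.integral_haar_liftIoc a₀ _
      (fun x => g x * Complex.exp (-(Complex.I * ((x * u / b : ℝ):ℂ)))) ?_, hext u]
    intro x hx
    rw [AddCircle.liftIoc_coe_apply hx, AddCircle.liftIoc_coe_apply hx]
    simp only [hEu]
    rw [SternAux.conj_exp_I_mul]
    ring
  -- inner products against the Fourier basis
  have hGinner : ∀ n : ℤ, (inner ℂ (fourierBasis n) Glp : ℂ)
      = fourierCoeff (AddCircle.liftIoc L a₀ g) n := by
    intro n
    rw [← fourierBasis.repr_apply_apply Glp n, fourierBasis_repr]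
    rw [fourierCoeff, fourierCoeff]
    apply integral_congr_ae
    filter_upwards [hgC.coeFn_toLp] with z hz
    simp only [hGlp]
    rw [hz]
  have hEinner : ∀ n : ℤ, (inner ℂ Elp (fourierBasis n) : ℂ)
      = ((_root_.sinc (u/Δ - n) : ℝ) : ℂ) := by
    intro n
    rw [← inner_conj_symm, ← fourierBasis.repr_apply_apply Elp n, fourierBasis_repr]
    have : fourierCoeff (Elp : AddCircle L → ℂ) n
        = fourierCoeff (AddCircle.liftIoc L a₀ (Eu u)) n := by
      rw [fourierCoeff, fourierCoeff]
      apply integral_congr_ae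
      filter_upwards [(hEC u).coeFn_toLp] with z hz
      simp only [hElp]
      rw [hz]
    rw [this, hcoeff_E n, Complex.conj_ofReal]
  -- Parseval
  have hmain : ∑' n : ℤ, ((_root_.sinc (u/Δ - n) : ℝ):ℂ) * ((1/L : ℂ) * G' ((n:ℝ) * Δ))
      = (1/L:ℂ) * G' u := by
    rw [← hinner, ← fourierBasis.tsum_inner_mul_inner Elp Glp]
    apply tsum_congr
    intro n
    rw [hEinner n, hGinner n, hcoeff_g n]
  have hG'sum : G' u = ∑' n:ℤ, ((_root_.sinc (u/Δ - n):ℝ):ℂ) * G' ((n:ℝ)*Δ) := by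
    have h1 : ∑' n : ℤ, ((_root_.sinc (u/Δ - n) : ℝ):ℂ) * ((1/L : ℂ) * G' ((n:ℝ) * Δ))
        = (1/L:ℂ) * ∑' n:ℤ, ((_root_.sinc (u/Δ - n):ℝ):ℂ) * G' ((n:ℝ)*Δ) := by
      rw [← tsum_mul_left]
      apply tsum_congr
      intro n
      ring
    rw [h1] at hmain
    have h1L : (1/L : ℂ) ≠ 0 := one_div_ne_zero hLc
    exact (mul_left_cancel₀ h1L hmain).symm
  -- conclusion
  rw [hFχ u]
  congr 1
  rw [hG'sum]
  apply tsum_congr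
  intro n
  rw [hFχ ((n:ℝ)*Δ), Complex.exp_neg]
  simp only [hχ]
  rw [mul_comm]
  field_simp [Complex.exp_ne_zero]
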